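/- Let ℬ = ⋃_{i∈ℤ} ℬ_i be a ℤ-filtered commutative ring whose associated graded ring gr ℬ is an integral domain, with 1 ∈ ℬ_0 \ ℬ_{-1}, and let δ ∈ ℬ_d \ ℬ_{d-1} with symbol δ̄ = δ + ℬ_{d-1} ∈ gr ℬ. Then the localization ℬ_δ carries a natural filtration (assigning b/δ^n filtration degree i − nd when b ∈ ℬ_i) for which there is an isomorphism of graded rings gr(ℬ_δ) ≅ (gr ℬ)_{δ̄}. -/

import Mathlib

section helpers
variable {R R' : Type*} [CommRing R] [CommRing R']

lemma aux_pow_mem (F : ℤ → AddSubgroup R)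
    (hone : (1 : R) ∈ F 0)
    (hmul : ∀ i j : ℤ, ∀ x ∈ F i, ∀ y ∈ F j, x * y ∈ F (i + j))
    {d : ℤ} {δ : R} (hδ : δ ∈ F d) : ∀ n : ℕ, δ ^ n ∈ F ((n : ℤ) * d) := by
  intro n
  induction n with
  | zero => simpa using hone
  | succ m ih =>
      rw [pow_succ]
      have := hmul _ _ _ ih _ hδ
      convert this using 2
      push_cast; ring

lemma aux_exists_deg (F : ℤ → AddSubgroup R) (hmono : Monotone F)
    (hexh : ∀ b : R, ∃ i : ℤ, b ∈ F i)
    (hsep : ∀ b : R, (∀ i : ℤ, b ∈ F i) → b = 0)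
    {x : R} (hx : x ≠ 0) : ∃ i : ℤ, x ∈ F i ∧ x ∉ F (i - 1) := by
  obtain ⟨j, hj⟩ : ∃ j : ℤ, x ∉ F j := by
    by_contra h; push_neg at h; exact hx (hsep x h)
  obtain ⟨i0, hi0⟩ := hexh x
  obtain ⟨lb, hlb, hmin⟩ := Int.exists_least_of_bdd (P := fun z => x ∈ F z)
    ⟨j + 1, fun z hz => by
      by_contra hc; push_neg at hc
      exact hj (hmono (by omega) hz)⟩ ⟨i0, hi0⟩
  exact ⟨lb, hlb, fun hc => by have := hmin _ hc; omega⟩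

lemma aux_mem_filt_closure_iff (f : R →+* R') (F : ℤ → AddSubgroup R)
    (hmul : ∀ i j : ℤ, ∀ x ∈ F i, ∀ y ∈ F j, x * y ∈ F (i + j))
    (d : ℤ) (δ : R) (hpow : ∀ n : ℕ, δ ^ n ∈ F ((n : ℤ) * d)) (k : ℤ) (y : R') :
    y ∈ AddSubgroup.closure {y : R' | ∃ (n : ℕ) (b : R), b ∈ F (k + (n : ℤ) * d) ∧
      y * (f δ) ^ n = f b}
    ↔ ∃ (n : ℕ) (b : R), b ∈ F (k + (n : ℤ) * d) ∧ y * (f δ) ^ n = f b := by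
  constructor
  · intro h
    refine AddSubgroup.closure_induction (fun x hx => hx) ⟨0, 0, by simpa using (F k).zero_mem, by simp⟩ ?_ ?_ h
    · rintro x y - - ⟨n1, b1, hb1, he1⟩ ⟨n2, b2, hb2, he2⟩
      refine ⟨n1 + n2, b1 * δ ^ n2 + b2 * δ ^ n1, ?_, ?_⟩
      · have e : k + ((n1 + n2 : ℕ) : ℤ) * d = (k + (n1 : ℤ) * d) + (n2 : ℤ) * d := by
          push_cast; ring
        rw [e]
        refine add_mem (hmul _ _ _ hb1 _ (hpow n2)) ?_
        have e2 : (k + (n1 : ℤ) * d) + (n2 : ℤ) * d = (k + (n2 : ℤ) * d) + (n1 : ℤ) * d := by ring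
        rw [e2]
        exact hmul _ _ _ hb2 _ (hpow n1)
      · rw [map_add, map_mul, map_mul, map_pow, map_pow, ← he1, ← he2, pow_add]
        ring
    · rintro x - ⟨n, b, hb, he⟩
      exact ⟨n, -b, neg_mem hb, by rw [map_neg, ← he]; ring⟩
  · intro h; exact AddSubgroup.subset_closure h

end helpers

lemma aux_unit_pow {R : Type*} [CommMonoid R] (u : Rˣ) (n1 n2 : ℕ) :
    (u : R) ^ n2 * ((u⁻¹ : Rˣ) : R) ^ (n1 + n2) = ((u⁻¹ : Rˣ) : R) ^ n1 := by
  have : ((u : R) ^ n2 * ((u⁻¹ : Rˣ) : R) ^ n2) = 1 := by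
    rw [← mul_pow]; simp
  rw [pow_add, ← mul_assoc, mul_comm ((u:R)^n2), mul_assoc, this, mul_one]

lemma aux_unit_cancel {R : Type*} [CommMonoid R] (u : Rˣ) (z1 z2 : R) (n1 n2 : ℕ)
    (h : z1 * (u : R) ^ n2 = z2 * (u : R) ^ n1) :
    z1 * ((u⁻¹ : Rˣ) : R) ^ n1 = z2 * ((u⁻¹ : Rˣ) : R) ^ n2 := by
  calc z1 * ((u⁻¹ : Rˣ) : R) ^ n1
      = z1 * ((u : R) ^ n2 * ((u⁻¹ : Rˣ) : R) ^ (n1 + n2)) := by rw [aux_unit_pow]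
    _ = (z1 * (u : R) ^ n2) * ((u⁻¹ : Rˣ) : R) ^ (n1 + n2) := by rw [mul_assoc]
    _ = (z2 * (u : R) ^ n1) * ((u⁻¹ : Rˣ) : R) ^ (n1 + n2) := by rw [h]
    _ = z2 * ((u : R) ^ n1 * ((u⁻¹ : Rˣ) : R) ^ (n2 + n1)) := by rw [Nat.add_comm n1 n2, mul_assoc]
    _ = z2 * ((u⁻¹ : Rˣ) : R) ^ n2 := by rw [aux_unit_pow]

lemma aux_unit_mul_inv_pow {R : Type*} [CommMonoid R] (u : Rˣ) (n : ℕ) (z : R) :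
    z * ((u⁻¹ : Rˣ) : R) ^ n * (u : R) ^ n = z := by
  rw [mul_assoc]
  have : (((u⁻¹ : Rˣ) : R) ^ n * (u : R) ^ n) = 1 := by rw [← mul_pow]; simp
  rw [this, mul_one]

lemma aux_unit_mul_pow_inv {R : Type*} [CommMonoid R] (u : Rˣ) (n : ℕ) (z : R) :
    z * (u : R) ^ n * ((u⁻¹ : Rˣ) : R) ^ n = z := by
  rw [mul_assoc]
  have : ((u : R) ^ n * ((u⁻¹ : Rˣ) : R) ^ n) = 1 := by rw [← mul_pow]; simp
  rw [this, mul_one]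


lemma aux_unit_mul_inv_pow' {R : Type*} [CommMonoid R] (u : Rˣ) {w : R} (hw : w = (u : R))
    (n : ℕ) (z : R) : z * ((u⁻¹ : Rˣ) : R) ^ n * w ^ n = z := by
  rw [hw]; exact aux_unit_mul_inv_pow u n z

set_option maxHeartbeats 400000 in


/-- Let `ℬ` be a `ℤ`-filtered commutative ring whose associated graded ring is a domain,
with `1 ∈ ℬ_0 \ ℬ_{-1}`, and let `δ ∈ ℬ_d \ ℬ_{d-1}` with symbol `δ̄ ∈ gr ℬ`.  Present
`gr ℬ` as a graded domain `A = ⊕ 𝒜_i` via symbol maps `σ_i : ℬ_i → A` (surjective onto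
`𝒜_i`, kernel `ℬ_{i-1}`, multiplicative and unital).  Give the localization `ℬ_δ` the
natural filtration `G` in which `b/δ^n` has degree `≤ k` whenever `b ∈ ℬ_{k+nd}`, and the
localization `(gr ℬ)_{δ̄}` the grading `H` with `H_k` generated by `ā/δ̄^n` for
`ā ∈ 𝒜_{k+nd}`.  Then `G` is a ring filtration and there is an isomorphism of graded
rings `gr(ℬ_δ) ≅ (gr ℬ)_{δ̄}`, i.e. `(gr ℬ)_{δ̄}` together with its grading `H` is an
associated graded of the filtered ring `(ℬ_δ, G)` via symbol maps `τ_k`. -/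
theorem stmt3 {B : Type*} [CommRing B]
    (F : ℤ → AddSubgroup B) (hmono : Monotone F)
    (hexh : ∀ b : B, ∃ i : ℤ, b ∈ F i)
    (hsep : ∀ b : B, (∀ i : ℤ, b ∈ F i) → b = 0)
    (h1 : (1 : B) ∈ F 0) (h1' : (1 : B) ∉ F (-1))
    (hmulF : ∀ i j : ℤ, ∀ x ∈ F i, ∀ y ∈ F j, x * y ∈ F (i + j))
    -- a presentation of the associated graded ring `A = gr ℬ`, a domain:
    {A : Type*} [CommRing A] [IsDomain A]
    (𝒜 : ℤ → AddSubgroup A) (hinternal : DirectSum.IsInternal 𝒜)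
    (σ : ∀ i : ℤ, F i →+ A)
    (hσrange : ∀ i : ℤ, (σ i).range = 𝒜 i)
    (hσker : ∀ (i : ℤ) (x : F i), σ i x = 0 ↔ (x : B) ∈ F (i - 1))
    (hσmul : ∀ (i j : ℤ) (x : F i) (y : F j)
      (hxy : (x : B) * (y : B) ∈ F (i + j)),
      σ (i + j) ⟨(x : B) * (y : B), hxy⟩ = σ i x * σ j y)
    (hσone : ∀ h : (1 : B) ∈ F 0, σ 0 ⟨1, h⟩ = 1)
    -- the element `δ` and its symbol `δ̄`:
    (d : ℤ) (δ : B) (hδ : δ ∈ F d) (hδ' : δ ∉ F (d - 1)) :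
    ∀ δbar : A, δbar = σ d ⟨δ, hδ⟩ →
    -- the natural filtration on `ℬ_δ`:
    ∀ G : ℤ → AddSubgroup (Localization.Away δ),
      (∀ k : ℤ, G k = AddSubgroup.closure
        {y : Localization.Away δ | ∃ (n : ℕ) (b : B), b ∈ F (k + (n : ℤ) * d) ∧
          y * (algebraMap B (Localization.Away δ) δ) ^ n =
            algebraMap B (Localization.Away δ) b}) →
    -- the natural grading on `(gr ℬ)_{δ̄}`:
    ∀ H : ℤ → AddSubgroup (Localization.Away δbar),
      (∀ k : ℤ, H k = AddSubgroup.closure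
        {y : Localization.Away δbar | ∃ (n : ℕ) (a : A), a ∈ 𝒜 (k + (n : ℤ) * d) ∧
          y * (algebraMap A (Localization.Away δbar) δbar) ^ n =
            algebraMap A (Localization.Away δbar) a}) →
      -- `G` is a ring filtration …
      Monotone G ∧ (∀ y : Localization.Away δ, ∃ k : ℤ, y ∈ G k) ∧
      (∀ y : Localization.Away δ, (∀ k : ℤ, y ∈ G k) → y = 0) ∧
      (1 : Localization.Away δ) ∈ G 0 ∧
      (∀ k l : ℤ, ∀ x ∈ G k, ∀ y ∈ G l, x * y ∈ G (k + l)) ∧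
      -- … `H` is an (internal) grading, and `(gr ℬ)_{δ̄}` with grading `H` is an
      -- associated graded of `(ℬ_δ, G)` via symbol maps `τ`; this says precisely that
      -- `gr(ℬ_δ) ≅ (gr ℬ)_{δ̄}` as graded rings:
      DirectSum.IsInternal H ∧
      ∃ τ : ∀ k : ℤ, G k →+ Localization.Away δbar,
        (∀ k : ℤ, (τ k).range = H k) ∧
        (∀ (k : ℤ) (y : G k), τ k y = 0 ↔ (y : Localization.Away δ) ∈ G (k - 1)) ∧
        (∀ (k l : ℤ) (x : G k) (y : G l)
          (hxy : (x : Localization.Away δ) * (y : Localization.Away δ) ∈ G (k + l)),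
          τ (k + l) ⟨(x : Localization.Away δ) * (y : Localization.Away δ), hxy⟩ =
            τ k x * τ l y) ∧
        (∀ h : (1 : Localization.Away δ) ∈ G 0, τ 0 ⟨1, h⟩ = 1) := by
  intro δbar hδbar G hG H hH
  -- Abbreviations
  set L := Localization.Away δ with hL
  set L' := Localization.Away δbar with hL'
  set φ := algebraMap B L with hφ
  set ψ := algebraMap A L' with hψ
  -- basic facts
  have σcongr : ∀ (i j : ℤ), i = j → ∀ (x : B) (hx : x ∈ F i) (hx' : x ∈ F j),
      σ i ⟨x, hx⟩ = σ j ⟨x, hx'⟩ := by rintro i j rfl x hx hx'; rfl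
  have hδ0 : δ ≠ 0 := fun h => hδ' (h ▸ (F (d - 1)).zero_mem)
  have hδbar0 : δbar ≠ 0 := by
    rw [hδbar]; intro h; exact hδ' ((hσker d ⟨δ, hδ⟩).mp h)
  have h1A : (1 : A) ∈ 𝒜 0 := by
    rw [← hσrange 0]; exact ⟨⟨1, h1⟩, hσone h1⟩
  have h𝒜mul : ∀ i j : ℤ, ∀ a ∈ 𝒜 i, ∀ b ∈ 𝒜 j, a * b ∈ 𝒜 (i + j) := by
    intro i j a ha b hb
    rw [← hσrange] at ha hb ⊢
    obtain ⟨x, rfl⟩ := ha; obtain ⟨y, rfl⟩ := hb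
    exact ⟨⟨(x : B) * (y : B), hmulF _ _ _ x.2 _ y.2⟩, hσmul i j x y _⟩
  have hδbar𝒜 : δbar ∈ 𝒜 d := by
    rw [hδbar, ← hσrange d]; exact ⟨⟨δ, hδ⟩, rfl⟩
  have hFpow := aux_pow_mem F h1 hmulF hδ
  have h𝒜pow := aux_pow_mem 𝒜 h1A h𝒜mul hδbar𝒜
  -- B is a domain
  have hBnz : ∀ x y : B, x ≠ 0 → y ≠ 0 → x * y ≠ 0 := by
    intro x y hx hy
    obtain ⟨i, hxi, hxi'⟩ := aux_exists_deg F hmono hexh hsep hx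
    obtain ⟨j, hyj, hyj'⟩ := aux_exists_deg F hmono hexh hsep hy
    have hσx : σ i ⟨x, hxi⟩ ≠ 0 := fun h => hxi' ((hσker i _).mp h)
    have hσy : σ j ⟨y, hyj⟩ ≠ 0 := fun h => hyj' ((hσker j _).mp h)
    have hxy : x * y ∈ F (i + j) := hmulF _ _ _ hxi _ hyj
    have : σ (i + j) ⟨x * y, hxy⟩ ≠ 0 := by
      rw [hσmul i j ⟨x, hxi⟩ ⟨y, hyj⟩ hxy]
      exact mul_ne_zero hσx hσy
    intro h
    apply this
    have : (⟨x * y, hxy⟩ : F (i + j)) = 0 := Subtype.ext h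
    rw [this, map_zero]
  haveI : Nontrivial B := ⟨1, 0, fun h => h1' (h ▸ (F (-1)).zero_mem)⟩
  haveI : NoZeroDivisors B := ⟨fun {x y} h => by
    by_contra hc; push_neg at hc; exact hBnz x y hc.1 hc.2 h⟩
  haveI : IsDomain B := NoZeroDivisors.to_isDomain B
  have hφinj : Function.Injective φ :=
    IsLocalization.injective _ (powers_le_nonZeroDivisors_of_noZeroDivisors hδ0)
  have hψinj : Function.Injective ψ :=
    IsLocalization.injective _ (powers_le_nonZeroDivisors_of_noZeroDivisors hδbar0)
  have huδ : IsUnit (φ δ) := IsLocalization.Away.algebraMap_isUnit δ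
  have huδb : IsUnit (ψ δbar) := IsLocalization.Away.algebraMap_isUnit δbar
  set u : L'ˣ := huδb.unit with hu
  have huspec : (u : L') = ψ δbar := huδb.unit_spec
  -- membership characterizations
  have hGmem : ∀ (k : ℤ) (y : L), y ∈ G k ↔
      ∃ (n : ℕ) (b : B), b ∈ F (k + (n : ℤ) * d) ∧ y * (φ δ) ^ n = φ b := by
    intro k y
    rw [hG k]
    exact aux_mem_filt_closure_iff φ F hmulF d δ hFpow k y
  have hHmem : ∀ (k : ℤ) (y : L'), y ∈ H k ↔
      ∃ (n : ℕ) (a : A), a ∈ 𝒜 (k + (n : ℤ) * d) ∧ y * (ψ δbar) ^ n = ψ a := by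
    intro k y
    rw [hH k]
    exact aux_mem_filt_closure_iff ψ 𝒜 h𝒜mul d δbar h𝒜pow k y
  -- symbol of powers of δ
  have hσδpow : ∀ (n : ℕ) (h : δ ^ n ∈ F ((n : ℤ) * d)),
      σ ((n : ℤ) * d) ⟨δ ^ n, h⟩ = δbar ^ n := by
    intro n
    induction n with
    | zero =>
        intro h
        have h' : δ ^ 0 ∈ F 0 := by simpa using h
        rw [σcongr _ 0 (by push_cast; ring) _ h h',
          show (⟨δ ^ 0, h'⟩ : F 0) = ⟨1, h1⟩ from Subtype.ext (pow_zero δ), hσone h1, pow_zero]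
    | succ m ih =>
        intro h
        have hm := hFpow m
        have hmem : δ ^ m * δ ∈ F ((m : ℤ) * d + d) := hmulF _ _ _ hm _ hδ
        have e : ((m + 1 : ℕ) : ℤ) * d = (m : ℤ) * d + d := by push_cast; ring
        rw [σcongr _ ((m : ℤ) * d + d) e _ h (by rw [pow_succ] at h ⊢; exact hmem)]
        have := hσmul ((m : ℤ) * d) d ⟨δ ^ m, hm⟩ ⟨δ, hδ⟩ hmem
        rw [show (⟨δ ^ (m+1), by rw [pow_succ] at h ⊢; exact hmem⟩ : F ((m : ℤ) * d + d))
            = ⟨δ ^ m * δ, hmem⟩ from Subtype.ext (pow_succ δ m), this, ih hm, ← hδbar, pow_succ]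
  -- key symbol compatibility
  have keyA : ∀ (i1 i2 : ℤ) (n1 n2 : ℕ) (b1 b2 : B) (hb1 : b1 ∈ F i1) (hb2 : b2 ∈ F i2),
      i1 + (n2 : ℤ) * d = i2 + (n1 : ℤ) * d →
      b1 * δ ^ n2 = b2 * δ ^ n1 →
      σ i1 ⟨b1, hb1⟩ * δbar ^ n2 = σ i2 ⟨b2, hb2⟩ * δbar ^ n1 := by
    intro i1 i2 n1 n2 b1 b2 hb1 hb2 hidx heq
    have m1 : b1 * δ ^ n2 ∈ F (i1 + (n2 : ℤ) * d) := hmulF _ _ _ hb1 _ (hFpow n2)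
    have m2 : b2 * δ ^ n1 ∈ F (i2 + (n1 : ℤ) * d) := hmulF _ _ _ hb2 _ (hFpow n1)
    have e1 : σ (i1 + (n2 : ℤ) * d) ⟨b1 * δ ^ n2, m1⟩ = σ i1 ⟨b1, hb1⟩ * δbar ^ n2 := by
      rw [hσmul i1 ((n2 : ℤ) * d) ⟨b1, hb1⟩ ⟨δ ^ n2, hFpow n2⟩ m1, hσδpow]
    have e2 : σ (i2 + (n1 : ℤ) * d) ⟨b2 * δ ^ n1, m2⟩ = σ i2 ⟨b2, hb2⟩ * δbar ^ n1 := by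
      rw [hσmul i2 ((n1 : ℤ) * d) ⟨b2, hb2⟩ ⟨δ ^ n1, hFpow n1⟩ m2, hσδpow]
    calc σ i1 ⟨b1, hb1⟩ * δbar ^ n2
        = σ (i1 + (n2 : ℤ) * d) ⟨b1 * δ ^ n2, m1⟩ := e1.symm
      _ = σ (i1 + (n2 : ℤ) * d) ⟨b2 * δ ^ n1, heq ▸ m1⟩ := by congr 1; exact Subtype.ext heq
      _ = σ (i2 + (n1 : ℤ) * d) ⟨b2 * δ ^ n1, m2⟩ := σcongr _ _ hidx _ _ _
      _ = σ i2 ⟨b2, hb2⟩ * δbar ^ n1 := e2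
  -- multiplying a symbol by a power of δ
  have mulσ : ∀ (i : ℤ) (b : B) (hb : b ∈ F i) (n : ℕ) (h' : b * δ ^ n ∈ F (i + (n : ℤ) * d)),
      σ (i + (n : ℤ) * d) ⟨b * δ ^ n, h'⟩ = σ i ⟨b, hb⟩ * δbar ^ n := by
    intro i b hb n h'
    rw [hσmul i ((n : ℤ) * d) ⟨b, hb⟩ ⟨δ ^ n, hFpow n⟩ h', hσδpow]
  -- choose witnesses for the filtration on the localization
  have W : ∀ (k : ℤ) (y : G k), ∃ (n : ℕ) (b : B),
      b ∈ F (k + (n : ℤ) * d) ∧ (y : L) * (φ δ) ^ n = φ b :=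
    fun k y => (hGmem k (y : L)).mp y.2
  choose nn bb hbb hee using W
  set τf : ∀ k : ℤ, G k → L' := fun k y =>
    ψ (σ (k + (nn k y : ℤ) * d) ⟨bb k y, hbb k y⟩) * ((u⁻¹ : L'ˣ) : L') ^ (nn k y) with hτf
  have τspec : ∀ (k : ℤ) (y : G k) (n : ℕ) (b : B) (hb : b ∈ F (k + (n : ℤ) * d)),
      (y : L) * (φ δ) ^ n = φ b →
      τf k y = ψ (σ (k + (n : ℤ) * d) ⟨b, hb⟩) * ((u⁻¹ : L'ˣ) : L') ^ n := by
    intro k y n b hb he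
    have hBeq : bb k y * δ ^ n = b * δ ^ (nn k y) := by
      apply hφinj
      rw [map_mul, map_mul, map_pow, map_pow, ← hee k y, ← he]
      ring
    have hA := keyA _ _ _ _ _ _ (hbb k y) hb (by ring) hBeq
    have hψeq : ψ (σ (k + (nn k y : ℤ) * d) ⟨bb k y, hbb k y⟩) * (u : L') ^ n
        = ψ (σ (k + (n : ℤ) * d) ⟨b, hb⟩) * (u : L') ^ (nn k y) := by
      rw [huspec, ← map_pow ψ, ← map_pow ψ, ← map_mul, ← map_mul, hA]
    exact aux_unit_cancel u _ _ _ _ hψeq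
  have τadd : ∀ (k : ℤ) (y1 y2 : G k), τf k (y1 + y2) = τf k y1 + τf k y2 := by
    intro k y1 y2
    have hb1 := hbb k y1; have hb2 := hbb k y2
    set n1 := nn k y1 with hn1; set n2 := nn k y2 with hn2
    have e12 : k + ((n1 + n2 : ℕ) : ℤ) * d = (k + (n1 : ℤ) * d) + (n2 : ℤ) * d := by
      push_cast; ring
    have e21 : k + ((n1 + n2 : ℕ) : ℤ) * d = (k + (n2 : ℤ) * d) + (n1 : ℤ) * d := by
      push_cast; ring
    have hm1 : bb k y1 * δ ^ n2 ∈ F (k + ((n1 + n2 : ℕ) : ℤ) * d) := by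
      rw [e12]; exact hmulF _ _ _ hb1 _ (hFpow n2)
    have hm2 : bb k y2 * δ ^ n1 ∈ F (k + ((n1 + n2 : ℕ) : ℤ) * d) := by
      rw [e21]; exact hmulF _ _ _ hb2 _ (hFpow n1)
    have hsum_mem : bb k y1 * δ ^ n2 + bb k y2 * δ ^ n1 ∈ F (k + ((n1 + n2 : ℕ) : ℤ) * d) :=
      add_mem hm1 hm2
    have hsum_eq : ((y1 + y2 : G k) : L) * (φ δ) ^ (n1 + n2)
        = φ (bb k y1 * δ ^ n2 + bb k y2 * δ ^ n1) := by
      rw [AddSubgroup.coe_add, map_add, map_mul, map_mul, map_pow, map_pow,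
        ← hee k y1, ← hee k y2]
      ring
    rw [τspec k (y1 + y2) (n1 + n2) _ hsum_mem hsum_eq]
    have hsplit : σ (k + ((n1 + n2 : ℕ) : ℤ) * d) ⟨_, hsum_mem⟩
        = σ (k + ((n1 + n2 : ℕ) : ℤ) * d) ⟨_, hm1⟩ + σ (k + ((n1 + n2 : ℕ) : ℤ) * d) ⟨_, hm2⟩ := by
      rw [← map_add]; rfl
    have c1 : σ (k + ((n1 + n2 : ℕ) : ℤ) * d) ⟨bb k y1 * δ ^ n2, hm1⟩
        = σ (k + (n1 : ℤ) * d) ⟨bb k y1, hb1⟩ * δbar ^ n2 := by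
      rw [σcongr _ _ e12 _ hm1 (by rw [← e12]; exact hm1), mulσ _ _ hb1]
    have c2 : σ (k + ((n1 + n2 : ℕ) : ℤ) * d) ⟨bb k y2 * δ ^ n1, hm2⟩
        = σ (k + (n2 : ℤ) * d) ⟨bb k y2, hb2⟩ * δbar ^ n1 := by
      rw [σcongr _ _ e21 _ hm2 (by rw [← e21]; exact hm2), mulσ _ _ hb2]
    rw [hsplit, c1, c2, map_add, map_mul, map_mul, map_pow, map_pow, ← huspec]
    rw [add_mul]
    congr 1
    · rw [mul_assoc, aux_unit_pow u n1 n2]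
    · rw [mul_assoc, Nat.add_comm n1 n2, aux_unit_pow u n2 n1]
  -- strictness of the filtration against powers of δ
  have hstrict : ∀ (i : ℤ) (b : B) (hb : b ∈ F i), σ i ⟨b, hb⟩ ≠ 0 →
      ∀ n : ℕ, b * δ ^ n ∉ F (i + (n : ℤ) * d - 1) := by
    intro i b hb hs n hmem
    have h2 : b * δ ^ n ∈ F (i + (n : ℤ) * d) := hmulF _ _ _ hb _ (hFpow n)
    have h3 : σ (i + (n : ℤ) * d) ⟨b * δ ^ n, h2⟩ = σ i ⟨b, hb⟩ * δbar ^ n := mulσ i b hb n h2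
    have h4 : σ (i + (n : ℤ) * d) ⟨b * δ ^ n, h2⟩ = 0 := (hσker _ _).mpr hmem
    rw [h3] at h4
    exact mul_ne_zero hs (pow_ne_zero n hδbar0) h4
  -- the main conjunction
  refine ⟨?_, ?_, ?_, ?_, ?_, ?_, ?_⟩
  · -- Monotone G
    intro k l hkl y hy
    obtain ⟨n, b, hb, he⟩ := (hGmem k y).mp hy
    exact (hGmem l y).mpr ⟨n, b, hmono (by omega) hb, he⟩
  · -- exhaustive
    intro y
    obtain ⟨⟨b, s⟩, hys⟩ := IsLocalization.surj (Submonoid.powers δ) y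
    obtain ⟨n, hn⟩ := s.2
    obtain ⟨i, hi⟩ := hexh b
    refine ⟨i - (n : ℤ) * d, (hGmem _ y).mpr ⟨n, b, ?_, ?_⟩⟩
    · rwa [show i - (n : ℤ) * d + (n : ℤ) * d = i by ring]
    · rw [← hn] at hys; rwa [map_pow] at hys
  · -- separated
    intro y hy
    by_contra hy0
    obtain ⟨⟨c, s⟩, hys⟩ := IsLocalization.surj (Submonoid.powers δ) y
    obtain ⟨M, hM⟩ := s.2
    rw [← hM, map_pow] at hys
    have hc0 : c ≠ 0 := by
      rintro rfl
      rw [map_zero] at hys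
      exact hy0 ((huδ.pow M).mul_right_cancel (by rw [hys, zero_mul]))
    obtain ⟨i, hci, hci'⟩ := aux_exists_deg F hmono hexh hsep hc0
    obtain ⟨n, b, hb, he⟩ := (hGmem (i - (M : ℤ) * d - 1) y).mp (hy _)
    have hBeq : c * δ ^ n = b * δ ^ M := by
      apply hφinj
      rw [map_mul, map_mul, map_pow, map_pow, ← hys, ← he]
      ring
    have hmem : b * δ ^ M ∈ F (i + (n : ℤ) * d - 1) := by
      have := hmulF _ _ _ hb _ (hFpow M)
      rwa [show i - (M : ℤ) * d - 1 + (n : ℤ) * d + (M : ℤ) * d = i + (n : ℤ) * d - 1 by ring]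
        at this
    rw [← hBeq] at hmem
    exact hstrict i c hci (fun h => hci' ((hσker i _).mp h)) n hmem
  · -- 1 ∈ G 0
    refine (hGmem 0 1).mpr ⟨0, 1, ?_, by simp⟩
    rwa [show (0 : ℤ) + ((0 : ℕ) : ℤ) * d = 0 by norm_num]
  · -- multiplicative
    intro k l x hx y hy
    obtain ⟨n1, b1, hb1, he1⟩ := (hGmem k x).mp hx
    obtain ⟨n2, b2, hb2, he2⟩ := (hGmem l y).mp hy
    refine (hGmem (k + l) (x * y)).mpr ⟨n1 + n2, b1 * b2, ?_, ?_⟩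
    · have := hmulF _ _ _ hb1 _ hb2
      rwa [show k + (n1 : ℤ) * d + (l + (n2 : ℤ) * d)
        = k + l + ((n1 + n2 : ℕ) : ℤ) * d by push_cast; ring] at this
    · rw [map_mul, pow_add, ← he1, ← he2]; ring
  · -- DirectSum.IsInternal H
    classical
    have WH : ∀ (k : ℤ) (z : H k), ∃ (n : ℕ) (a : A),
        a ∈ 𝒜 (k + (n : ℤ) * d) ∧ (z : L') * (ψ δbar) ^ n = ψ a :=
      fun k z => (hHmem k (z : L')).mp z.2
    choose mH aH haH heH using WH
    have hcoe : ∀ (x : DirectSum ℤ (fun i => 𝒜 i)),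
        DirectSum.coeAddMonoidHom 𝒜 x = ∑ i ∈ x.support, ((x i : A)) := by
      intro x
      conv_lhs => rw [← DirectSum.sum_support_of x]
      rw [map_sum]
      exact Finset.sum_congr rfl fun i _ => DirectSum.coeAddMonoidHom_of 𝒜 i (x i)
    have hcoeH : ∀ (g : DirectSum ℤ (fun k => H k)),
        DirectSum.coeAddMonoidHom H g = ∑ k ∈ g.support, ((g k : L')) := by
      intro g
      conv_lhs => rw [← DirectSum.sum_support_of g]
      rw [map_sum]
      exact Finset.sum_congr rfl fun k _ => DirectSum.coeAddMonoidHom_of H k (g k)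
    constructor
    · -- injectivity
      rw [injective_iff_map_eq_zero]
      intro g hg0
      set N := g.support.sup (fun k => mH k (g k)) with hN
      have hle : ∀ k ∈ g.support, mH k (g k) ≤ N :=
        fun k hk => Finset.le_sup (f := fun k => mH k (g k)) hk
      have hsum0 : ∑ k ∈ g.support, ((g k : L')) = 0 := by rw [← hcoeH, hg0]
      have hck : ∀ k : {x // x ∈ g.support},
          aH ↑k (g ↑k) * δbar ^ (N - mH ↑k (g ↑k)) ∈ 𝒜 ((k : ℤ) + (N : ℤ) * d) := by
        intro k
        have := h𝒜mul _ _ _ (haH ↑k (g ↑k)) _ (h𝒜pow (N - mH ↑k (g ↑k)))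
        rwa [show (k : ℤ) + (mH ↑k (g ↑k) : ℤ) * d + ((N - mH ↑k (g ↑k) : ℕ) : ℤ) * d
            = (k : ℤ) + (N : ℤ) * d by rw [Nat.cast_sub (hle ↑k k.2)]; ring] at this
      have hcsum : ∑ k ∈ g.support.attach,
          (aH ↑k (g ↑k) * δbar ^ (N - mH ↑k (g ↑k))) = 0 := by
        apply hψinj
        rw [map_zero, map_sum]
        calc ∑ k ∈ g.support.attach, ψ (aH ↑k (g ↑k) * δbar ^ (N - mH ↑k (g ↑k)))
            = ∑ k ∈ g.support.attach, ((g ↑k : L')) * (ψ δbar) ^ N := by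
              refine Finset.sum_congr rfl fun k _ => ?_
              rw [map_mul, map_pow, ← heH ↑k (g ↑k), mul_assoc, ← pow_add,
                Nat.add_sub_cancel' (hle ↑k k.2)]
          _ = (∑ k ∈ g.support.attach, ((g ↑k : L'))) * (ψ δbar) ^ N := by
              rw [Finset.sum_mul]
          _ = 0 := by
              rw [Finset.sum_attach g.support (fun k => ((g k : L'))), hsum0, zero_mul]
      have hw0 : (∑ k ∈ g.support.attach,
          DirectSum.of (fun i => 𝒜 i) ((k : ℤ) + (N : ℤ) * d)
            ⟨aH ↑k (g ↑k) * δbar ^ (N - mH ↑k (g ↑k)), hck k⟩)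
          = (0 : DirectSum ℤ (fun i => 𝒜 i)) := by
        apply hinternal.injective
        rw [map_zero, map_sum]
        calc ∑ k ∈ g.support.attach, DirectSum.coeAddMonoidHom 𝒜
              (DirectSum.of (fun i => 𝒜 i) ((k : ℤ) + (N : ℤ) * d)
                ⟨aH ↑k (g ↑k) * δbar ^ (N - mH ↑k (g ↑k)), hck k⟩)
            = ∑ k ∈ g.support.attach, (aH ↑k (g ↑k) * δbar ^ (N - mH ↑k (g ↑k))) :=
              Finset.sum_congr rfl fun k _ => DirectSum.coeAddMonoidHom_of 𝒜 _ _
          _ = 0 := hcsum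
      have hc0 : ∀ k : {x // x ∈ g.support},
          aH ↑k (g ↑k) * δbar ^ (N - mH ↑k (g ↑k)) = 0 := by
        intro k
        have h5 := congrArg (fun v : DirectSum ℤ (fun i => 𝒜 i) => v ((k : ℤ) + (N : ℤ) * d)) hw0
        simp only at h5
        rw [DFinsupp.finset_sum_apply] at h5
        have h6 : ∑ a ∈ (DFinsupp.support g).attach,
            ((DirectSum.of (fun i => 𝒜 i) ((a : ℤ) + (N : ℤ) * d))
              ⟨aH ↑a (g ↑a) * δbar ^ (N - mH ↑a (g ↑a)), hck a⟩) ((k : ℤ) + (N : ℤ) * d)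
            = ((DirectSum.of (fun i => 𝒜 i) ((k : ℤ) + (N : ℤ) * d))
              ⟨aH ↑k (g ↑k) * δbar ^ (N - mH ↑k (g ↑k)), hck k⟩) ((k : ℤ) + (N : ℤ) * d) :=
          Finset.sum_eq_single_of_mem k (Finset.mem_attach _ k)
            (fun b _ hb => DirectSum.of_eq_of_ne _ _ _
              (fun hcon => hb (Subtype.ext (add_right_cancel hcon).symm)))
        rw [h6, DirectSum.of_eq_same, DFinsupp.zero_apply] at h5
        have := congrArg (Subtype.val) h5
        exact this.trans (ZeroMemClass.coe_zero _)
      refine DFinsupp.ext fun k => ?_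
      by_cases hk : k ∈ g.support
      · have := hc0 ⟨k, hk⟩
        have ha0 : aH k (g k) = 0 := by
          rcases mul_eq_zero.mp this with h | h
          · exact h
          · exact absurd h (pow_ne_zero _ hδbar0)
        have hz : (g k : L') * (ψ δbar) ^ (mH k (g k)) = 0 := by
          rw [heH, ha0, map_zero]
        have hg0' : (g k : L') = 0 := (huδb.pow _).mul_right_cancel (by rw [hz, zero_mul])
        rw [DFinsupp.zero_apply]
        exact Subtype.ext hg0'
      · rw [DFinsupp.zero_apply]
        exact DFinsupp.notMem_support_iff.mp hk
    · -- surjectivity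
      intro y
      suffices hy : y ∈ (DirectSum.coeAddMonoidHom H).range by
        obtain ⟨g, hgy⟩ := hy; exact ⟨g, hgy⟩
      obtain ⟨⟨a, s⟩, hys⟩ := IsLocalization.surj (Submonoid.powers δbar) y
      obtain ⟨n, hn⟩ := s.2
      rw [← hn, map_pow] at hys
      obtain ⟨x, hx⟩ := hinternal.surjective a
      have hxa : (∑ i ∈ x.support, ((x i : A))) = a := by rw [← hcoe]; exact hx
      have hyrep : y = ∑ i ∈ x.support, ψ (x i : A) * ((u⁻¹ : L'ˣ) : L') ^ n := by
        have h6 : y = ψ a * ((u⁻¹ : L'ˣ) : L') ^ n := by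
          rw [← hys, ← huspec, aux_unit_mul_pow_inv]
        rw [h6, ← hxa, map_sum, Finset.sum_mul]
      rw [hyrep]
      apply AddSubgroup.sum_mem
      intro i _
      have hmem : ψ (x i : A) * ((u⁻¹ : L'ˣ) : L') ^ n ∈ H (i - (n : ℤ) * d) := by
        refine (hHmem _ _).mpr ⟨n, (x i : A), ?_, ?_⟩
        · rw [show i - (n : ℤ) * d + (n : ℤ) * d = i by ring]; exact (x i).2
        · rw [← huspec, aux_unit_mul_inv_pow]
      exact ⟨DirectSum.of _ _ ⟨_, hmem⟩, DirectSum.coeAddMonoidHom_of _ _ _⟩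
  · -- the symbol maps τ
    refine ⟨fun k => AddMonoidHom.mk' (τf k) (τadd k), ?_, ?_, ?_, ?_⟩
    · -- range
      intro k
      ext z
      constructor
      · rintro ⟨y, rfl⟩
        refine (hHmem k _).mpr ⟨nn k y, σ (k + (nn k y : ℤ) * d) ⟨bb k y, hbb k y⟩, ?_, ?_⟩
        · rw [← hσrange]; exact ⟨_, rfl⟩
        · show ψ _ * _ ^ nn k y * ψ δbar ^ nn k y = _
          rw [← huspec, aux_unit_mul_inv_pow]
      · intro hz
        obtain ⟨n, a, ha, hea⟩ := (hHmem k z).mp hz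
        rw [← hσrange] at ha
        obtain ⟨x, hx⟩ := ha
        have hymem : φ (x : B) * ((huδ.unit⁻¹ : Lˣ) : L) ^ n ∈ G k := by
          refine (hGmem k _).mpr ⟨n, (x : B), x.2, ?_⟩
          exact aux_unit_mul_inv_pow' huδ.unit huδ.unit_spec.symm n _
        refine ⟨⟨_, hymem⟩, ?_⟩
        have hts := τspec k ⟨_, hymem⟩ n (x : B) x.2
          (aux_unit_mul_inv_pow' huδ.unit huδ.unit_spec.symm n _)
        show τf k _ = z
        rw [hts]
        have hzx : z = ψ a * ((u⁻¹ : L'ˣ) : L') ^ n := by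
          rw [← hea, ← huspec, aux_unit_mul_pow_inv]
        rw [hzx, ← hx]
    · -- kernel
      intro k y
      show τf k y = 0 ↔ _
      constructor
      · intro h0
        have hσ0 : σ (k + (nn k y : ℤ) * d) ⟨bb k y, hbb k y⟩ = 0 := by
          apply hψinj
          rw [map_zero]
          calc ψ (σ (k + (nn k y : ℤ) * d) ⟨bb k y, hbb k y⟩)
              = τf k y * (u : L') ^ (nn k y) := by
                show _ = ψ _ * _ ^ nn k y * (u : L') ^ nn k y
                rw [aux_unit_mul_inv_pow]
            _ = 0 := by rw [h0, zero_mul]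
        have hbmem : bb k y ∈ F (k + (nn k y : ℤ) * d - 1) := (hσker _ _).mp hσ0
        refine (hGmem (k - 1) (y : L)).mpr ⟨nn k y, bb k y, ?_, hee k y⟩
        rwa [show k - 1 + (nn k y : ℤ) * d = k + (nn k y : ℤ) * d - 1 by ring]
      · intro hy'
        obtain ⟨m, c, hc, hec⟩ := (hGmem (k - 1) (y : L)).mp hy'
        have hBeq : bb k y * δ ^ m = c * δ ^ (nn k y) := by
          apply hφinj
          rw [map_mul, map_mul, map_pow, map_pow, ← hee k y, ← hec]
          ring
        have hσ0 : σ (k + (nn k y : ℤ) * d) ⟨bb k y, hbb k y⟩ = 0 := by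
          by_contra hs
          have hmem : bb k y * δ ^ m ∈ F (k + (nn k y : ℤ) * d + (m : ℤ) * d - 1) := by
            rw [hBeq]
            have := hmulF _ _ _ hc _ (hFpow (nn k y))
            rwa [show k - 1 + (m : ℤ) * d + (nn k y : ℤ) * d
              = k + (nn k y : ℤ) * d + (m : ℤ) * d - 1 by ring] at this
          exact hstrict _ _ (hbb k y) hs m hmem
        show ψ _ * _ = 0
        rw [hσ0, map_zero, zero_mul]
    · -- multiplicative
      intro k l x y hxy
      have hb1 := hbb k x; have hb2 := hbb l y
      set n1 := nn k x; set n2 := nn l y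
      have e : k + l + ((n1 + n2 : ℕ) : ℤ) * d = (k + (n1 : ℤ) * d) + (l + (n2 : ℤ) * d) := by
        push_cast; ring
      have hm : bb k x * bb l y ∈ F (k + l + ((n1 + n2 : ℕ) : ℤ) * d) := by
        rw [e]; exact hmulF _ _ _ hb1 _ hb2
      have heq : ((⟨(x : L) * (y : L), hxy⟩ : G (k + l)) : L) * (φ δ) ^ (n1 + n2)
          = φ (bb k x * bb l y) := by
        show (x : L) * (y : L) * (φ δ) ^ (n1 + n2) = _
        rw [map_mul, pow_add, ← hee k x, ← hee l y]
        ring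
      show τf (k + l) _ = τf k x * τf l y
      rw [τspec (k + l) _ (n1 + n2) _ hm heq]
      have hσsplit : σ (k + l + ((n1 + n2 : ℕ) : ℤ) * d) ⟨bb k x * bb l y, hm⟩
          = σ (k + (n1 : ℤ) * d) ⟨bb k x, hb1⟩ * σ (l + (n2 : ℤ) * d) ⟨bb l y, hb2⟩ := by
        rw [σcongr _ _ e _ hm (by rw [← e]; exact hm)]
        exact hσmul _ _ ⟨bb k x, hb1⟩ ⟨bb l y, hb2⟩ _
      rw [hσsplit, map_mul, pow_add]
      show _ = ψ _ * _ ^ n1 * (ψ _ * _ ^ n2)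
      ring
    · -- unital
      intro h
      have h1m : (1 : B) ∈ F ((0 : ℤ) + ((0 : ℕ) : ℤ) * d) := by
        rwa [show (0 : ℤ) + ((0 : ℕ) : ℤ) * d = 0 by norm_num]
      have := τspec 0 ⟨1, h⟩ 0 1 h1m (by simp)
      show τf 0 _ = 1
      rw [this, σcongr _ 0 (by norm_num) _ h1m h1, hσone h1, map_one, pow_zero, mul_one]
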